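/- Let G be a simple graph on vertices x1,…,xn with edge ideal I(G) in the polynomial ring S = K[x1,…,xn], and let x_i x_j be an edge of G. Set L := N_G(x_i) ∩ N_G(x_j), and let G' be the graph with vertex set V(G) \ L and edge set E(G \ L) ∪ { x_p x_q : x_p ∈ N_{G\L}(x_i), x_q ∈ N_{G\L}(x_j) }. Then (I(G) : x_i) ∩ (I(G) : x_j) = I(G') + (L), where (L) is the ideal generated by the variables in L. -/

import Mathlib

open MvPolynomial

/-- The closed neighborhood of a vertex. -/
def closedNbhd {V : Type} (G : SimpleGraph V) (x : V) : Set V :=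
  insert x (G.neighborSet x)

/-- A finite set of vertices is a star packing if the closed neighborhoods of its
elements (the vertex sets of the corresponding stars) are pairwise disjoint. -/
def IsStarPacking {V : Type} (G : SimpleGraph V) (s : Finset V) : Prop :=
  (s : Set V).Pairwise fun x y => Disjoint (closedNbhd G x) (closedNbhd G y)

/-- The star packing number `α₂(G)`: the maximum size of a star packing. -/
noncomputable def starPackingNumber {V : Type} (G : SimpleGraph V) : ℕ :=
  sSup {n | ∃ s : Finset V, IsStarPacking G s ∧ s.card = n}

/-- The whiskered triangle `W(K₃)`: a triangle on vertices `0, 1, 2` with pendant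
vertices `3, 4, 5` attached to them respectively. -/
def whiskeredTriangle : SimpleGraph (Fin 6) :=
  SimpleGraph.fromEdgeSet {s(0, 1), s(0, 2), s(1, 2), s(0, 3), s(1, 4), s(2, 5)}

/-- `G` is `W(K₃)`-free: no induced subgraph of `G` is isomorphic to the whiskered
triangle. -/
def WK3Free {V : Type} (G : SimpleGraph V) : Prop :=
  ¬ ∃ f : Fin 6 ↪ V, ∀ a b, whiskeredTriangle.Adj a b ↔ G.Adj (f a) (f b)

/-- The edge ideal of a graph `G`, in the polynomial ring `K[x_v : v ∈ V]`. -/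
noncomputable def edgeIdeal {V : Type} (K : Type) [Field K] (G : SimpleGraph V) :
    Ideal (MvPolynomial V K) :=
  Ideal.span {m | ∃ x y, G.Adj x y ∧ m = X x * X y}

/-- The graph `G'` of the lemma: vertex set `V(G) \ L` (vertices of `L` are isolated),
whose edges are the edges of `G \ L` together with all pairs `{p, q}` with
`p ∈ N_{G\L}(x_i)` and `q ∈ N_{G\L}(x_j)`. -/
def lemGraph {V : Type} (G : SimpleGraph V) (xi xj : V) (L : Set V) : SimpleGraph V :=
  SimpleGraph.fromRel fun p q =>
    (G.Adj p q ∧ p ∉ L ∧ q ∉ L) ∨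
    ((G.Adj xi p ∧ p ∉ L) ∧ (G.Adj xj q ∧ q ∉ L))

section Aux

variable {V : Type}

lemma one_le_add_single (m : V →₀ ℕ) (z x : V) :
    1 ≤ (m + Finsupp.single z 1 : V →₀ ℕ) x ↔ x = z ∨ 1 ≤ m x := by
  classical
  rw [Finsupp.add_apply, Finsupp.single_apply]
  by_cases h : z = x
  · subst h; simp
  · simp [h, Ne.symm h]

lemma pair_le_iff {x y : V} (hxy : x ≠ y) (m : V →₀ ℕ) :
    Finsupp.single x 1 + Finsupp.single y 1 ≤ m ↔ 1 ≤ m x ∧ 1 ≤ m y := by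
  classical
  rw [Finsupp.le_def]
  constructor
  · intro h
    constructor
    · have := h x
      simpa [Finsupp.single_apply, Ne.symm hxy] using this
    · have := h y
      simpa [Finsupp.single_apply, hxy] using this
  · rintro ⟨h1, h2⟩ s
    simp only [Finsupp.add_apply, Finsupp.single_apply]
    by_cases hx : x = s <;> by_cases hy : y = s <;> subst_vars <;> simp_all <;> omega

end Aux


/-- generator set of exponent vectors of an edge ideal -/
def edgeSet' {V : Type} (G : SimpleGraph V) : Set (V →₀ ℕ) :=
  {s | ∃ x y, G.Adj x y ∧ s = Finsupp.single x 1 + Finsupp.single y 1}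

lemma edgeIdeal_eq {V K : Type} [Field K] (G : SimpleGraph V) :
    edgeIdeal K G = Ideal.span ((fun s => monomial s (1 : K)) '' edgeSet' G) := by
  unfold edgeIdeal edgeSet'
  congr 1
  ext f
  simp only [Set.mem_image, Set.mem_setOf_eq]
  constructor
  · rintro ⟨x, y, h, rfl⟩
    exact ⟨_, ⟨x, y, h, rfl⟩, by rw [X, X, monomial_mul, one_mul]⟩
  · rintro ⟨s, ⟨x, y, h, rfl⟩, rfl⟩
    exact ⟨x, y, h, by rw [X, X, monomial_mul, one_mul]⟩

lemma mem_colon_iff {V K : Type} [Field K] (G : SimpleGraph V) (z : V)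
    (f : MvPolynomial V K) :
    f ∈ (edgeIdeal K G).colon ((Ideal.span {X z} : Ideal (MvPolynomial V K)) : Set (MvPolynomial V K)) ↔
      ∀ m ∈ f.support, ∃ s ∈ edgeSet' G, s ≤ m + Finsupp.single z 1 := by
  rw [Ideal.mem_colon_span_singleton, edgeIdeal_eq, mem_ideal_span_monomial_image,
    support_mul_X]
  simp [Finset.forall_mem_map, addRightEmbedding_apply]


lemma cond_iff {V : Type} (G : SimpleGraph V) (m : V →₀ ℕ) (z : V) :
    (∃ s ∈ edgeSet' G, s ≤ m + Finsupp.single z 1) ↔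
      ∃ x y, G.Adj x y ∧ (x = z ∨ 1 ≤ m x) ∧ (y = z ∨ 1 ≤ m y) := by
  constructor
  · rintro ⟨s, ⟨x, y, hxy, rfl⟩, hle⟩
    rw [pair_le_iff hxy.ne, one_le_add_single, one_le_add_single] at hle
    exact ⟨x, y, hxy, hle⟩
  · rintro ⟨x, y, hxy, h1, h2⟩
    refine ⟨_, ⟨x, y, hxy, rfl⟩, ?_⟩
    rw [pair_le_iff hxy.ne, one_le_add_single, one_le_add_single]
    exact ⟨h1, h2⟩

lemma full_case {V : Type} (G : SimpleGraph V) (xi xj : V) (L : Set V) (m : V →₀ ℕ)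
    {a b : V} (hab : G.Adj a b) (ha : 1 ≤ m a) (hb : 1 ≤ m b) :
    ∃ s ∈ edgeSet' (lemGraph G xi xj L) ∪ (fun k => Finsupp.single k 1) '' L, s ≤ m := by
  by_cases haL : a ∈ L
  · exact ⟨Finsupp.single a 1, Or.inr ⟨a, haL, rfl⟩, Finsupp.single_le_iff.2 ha⟩
  by_cases hbL : b ∈ L
  · exact ⟨Finsupp.single b 1, Or.inr ⟨b, hbL, rfl⟩, Finsupp.single_le_iff.2 hb⟩
  refine ⟨_, Or.inl ⟨a, b, ?_, rfl⟩, (pair_le_iff hab.ne m).2 ⟨ha, hb⟩⟩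
  rw [lemGraph, SimpleGraph.fromRel_adj]
  exact ⟨hab.ne, Or.inl (Or.inl ⟨hab, haL, hbL⟩)⟩

lemma key {V : Type} (G : SimpleGraph V) (xi xj : V) (m : V →₀ ℕ) :
    ((∃ s ∈ edgeSet' G, s ≤ m + Finsupp.single xi 1) ∧
     (∃ s ∈ edgeSet' G, s ≤ m + Finsupp.single xj 1)) ↔
    ∃ s ∈ edgeSet' (lemGraph G xi xj (G.neighborSet xi ∩ G.neighborSet xj)) ∪
        (fun k => Finsupp.single k 1) '' ((G.neighborSet xi ∩ G.neighborSet xj : Set V)),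
      s ≤ m := by
  set L : Set V := G.neighborSet xi ∩ G.neighborSet xj with hLdef
  have hLmem : ∀ k, k ∈ L ↔ G.Adj xi k ∧ G.Adj xj k := by
    intro k; simp [hLdef, SimpleGraph.mem_neighborSet]
  rw [cond_iff, cond_iff]
  constructor
  · rintro ⟨⟨x, y, hxy, h1, h2⟩, ⟨p', q', hpq, h3, h4⟩⟩
    have hi : (∃ a b, G.Adj a b ∧ 1 ≤ m a ∧ 1 ≤ m b) ∨ ∃ p, G.Adj xi p ∧ 1 ≤ m p := by
      rcases h1 with rfl | h1 <;> rcases h2 with rfl | h2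
      · exact absurd rfl hxy.ne
      · exact Or.inr ⟨y, hxy, h2⟩
      · exact Or.inr ⟨x, hxy.symm, h1⟩
      · exact Or.inl ⟨x, y, hxy, h1, h2⟩
    have hj : (∃ a b, G.Adj a b ∧ 1 ≤ m a ∧ 1 ≤ m b) ∨ ∃ q, G.Adj xj q ∧ 1 ≤ m q := by
      rcases h3 with rfl | h3 <;> rcases h4 with rfl | h4
      · exact absurd rfl hpq.ne
      · exact Or.inr ⟨q', hpq, h4⟩
      · exact Or.inr ⟨p', hpq.symm, h3⟩
      · exact Or.inl ⟨p', q', hpq, h3, h4⟩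
    rcases hi with ⟨a, b, hab, ha, hb⟩ | ⟨p, hp, hmp⟩
    · exact full_case G xi xj L m hab ha hb
    rcases hj with ⟨a, b, hab, ha, hb⟩ | ⟨q, hq, hmq⟩
    · exact full_case G xi xj L m hab ha hb
    by_cases hpL : p ∈ L
    · exact ⟨_, Or.inr ⟨p, hpL, rfl⟩, Finsupp.single_le_iff.2 hmp⟩
    by_cases hqL : q ∈ L
    · exact ⟨_, Or.inr ⟨q, hqL, rfl⟩, Finsupp.single_le_iff.2 hmq⟩
    have hne : p ≠ q := by
      rintro rfl
      exact hpL ((hLmem p).2 ⟨hp, hq⟩)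
    refine ⟨_, Or.inl ⟨p, q, ?_, rfl⟩, (pair_le_iff hne m).2 ⟨hmp, hmq⟩⟩
    rw [lemGraph, SimpleGraph.fromRel_adj]
    exact ⟨hne, Or.inl (Or.inr ⟨⟨hp, hpL⟩, ⟨hq, hqL⟩⟩)⟩
  · rintro ⟨s, hs | ⟨k, hkL, rfl⟩, hle⟩
    · obtain ⟨p, q, hadj, rfl⟩ := hs
      rw [lemGraph, SimpleGraph.fromRel_adj] at hadj
      obtain ⟨hne, hrel⟩ := hadj
      obtain ⟨hmp, hmq⟩ := (pair_le_iff hne m).1 hle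
      rcases hrel with (⟨hpq, -, -⟩ | ⟨⟨hp, -⟩, ⟨hq, -⟩⟩) | (⟨hqp, -, -⟩ | ⟨⟨hq, -⟩, ⟨hp, -⟩⟩)
      · exact ⟨⟨p, q, hpq, Or.inr hmp, Or.inr hmq⟩, ⟨p, q, hpq, Or.inr hmp, Or.inr hmq⟩⟩
      · exact ⟨⟨xi, p, hp, Or.inl rfl, Or.inr hmp⟩, ⟨xj, q, hq, Or.inl rfl, Or.inr hmq⟩⟩
      · exact ⟨⟨q, p, hqp, Or.inr hmq, Or.inr hmp⟩, ⟨q, p, hqp, Or.inr hmq, Or.inr hmp⟩⟩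
      · exact ⟨⟨xi, q, hq, Or.inl rfl, Or.inr hmq⟩, ⟨xj, p, hp, Or.inl rfl, Or.inr hmp⟩⟩
    · obtain ⟨hki, hkj⟩ := (hLmem k).1 hkL
      have hmk : 1 ≤ m k := Finsupp.single_le_iff.1 hle
      exact ⟨⟨xi, k, hki, Or.inl rfl, Or.inr hmk⟩, ⟨xj, k, hkj, Or.inl rfl, Or.inr hmk⟩⟩

/-- For an edge `x_i x_j` of `G`, with `L = N_G(x_i) ∩ N_G(x_j)` and `G'` the graph
described above, `(I(G) : x_i) ∩ (I(G) : x_j) = I(G') + (L)`. -/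
theorem colon_intersection_eq {V : Type} (K : Type) [Field K]
    (G : SimpleGraph V) (xi xj : V) (hij : G.Adj xi xj) :
    (edgeIdeal K G).colon ((Ideal.span {X xi} : Ideal (MvPolynomial V K)) : Set (MvPolynomial V K)) ⊓ (edgeIdeal K G).colon ((Ideal.span {X xj} : Ideal (MvPolynomial V K)) : Set (MvPolynomial V K)) =
      edgeIdeal K (lemGraph G xi xj (G.neighborSet xi ∩ G.neighborSet xj)) +
        Ideal.span (X '' (G.neighborSet xi ∩ G.neighborSet xj)) := by

  ext f
  rw [Submodule.mem_inf, mem_colon_iff, mem_colon_iff]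
  have hX : (X '' ((G.neighborSet xi ∩ G.neighborSet xj : Set V)) : Set (MvPolynomial V K)) =
      (fun s => monomial s (1 : K)) ''
        ((fun k => Finsupp.single k 1) '' (G.neighborSet xi ∩ G.neighborSet xj : Set V)) := by
    rw [Set.image_image]; rfl
  rw [edgeIdeal_eq, hX, Submodule.add_eq_sup, ← Ideal.span_union, ← Set.image_union,
    mem_ideal_span_monomial_image]
  simp only [← forall_and]
  exact forall₂_congr fun m hm => key G xi xj m
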